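/- Drift over a phase of AM. Consider the MMAHH with acceptance operators OI and AM on f = OneMax, with p, q ∈ (0,1), started from an arbitrary x_0 ∈ L_i with i ∈ [0..n] and s_0 = AM. Then E[y_0 − y_{T_s^{(1)}}] = (2i − n)/(2 + q(n − 2)). -/

import Mathlib

open MeasureTheory
open scoped ENNReal NNReal

namespace MMAHHStmt

/-- The two acceptance operators. -/
inductive Op : Type
  | OI : Op
  | AM : Op
  deriving DecidableEq

instance : MeasurableSpace Op := ⊤

/-- Search points: bit-strings of length `n`. -/
abbrev Point (n : ℕ) := Fin n → Bool

/-- The number of one-bits of a bit-string. -/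
def ones {n : ℕ} (x : Point n) : ℕ := (Finset.univ.filter fun i => x i = true).card

/-- The all-ones string, the global optimum of all benchmarks considered. -/
def optimum (n : ℕ) : Point n := fun _ => true

/-- Flipping the bit in position `v`. -/
def flipBit {n : ℕ} (x : Point n) (v : Fin n) : Point n := Function.update x v (!(x v))

open Classical in
/-- The search point obtained from `x` by proposing to flip bit `v` and applying the
acceptance operator `op` for the objective function `f`. -/
noncomputable def movedPoint {n : ℕ} (f : Point n → ℝ) (op : Op) (x : Point n) (v : Fin n) :
    Point n :=
  match op with
  | Op.OI => if f x < f (flipBit x v) then flipBit x v else x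
  | Op.AM => flipBit x v

open Classical in
/-- One-step transition probability of the search point under acceptance operator `op`:
a uniformly random bit is flipped and the move is accepted or rejected according to `op`. -/
noncomputable def moveProb {n : ℕ} (f : Point n → ℝ) (op : Op) (x x' : Point n) : ℝ≥0∞ :=
  ((Finset.univ.filter fun v => movedPoint f op x v = x').card : ℝ≥0∞) / n

/-- Transition probabilities of the two-state Markov chain on the acceptance operators. -/
noncomputable def switchProb (p q : ℝ) : Op → Op → ℝ≥0∞
  | Op.OI, Op.OI => ENNReal.ofReal (1 - p)
  | Op.OI, Op.AM => ENNReal.ofReal p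
  | Op.AM, Op.OI => ENNReal.ofReal q
  | Op.AM, Op.AM => ENNReal.ofReal (1 - q)

/-- One-step transition probabilities of the MMAHH on the state space
`Point n × Op`: the search point moves according to the current acceptance operator, and,
independently, the operator switches according to the two-state Markov chain. -/
noncomputable def mmahhTrans {n : ℕ} (f : Point n → ℝ) (p q : ℝ) :
    Point n × Op → Point n × Op → ℝ≥0∞ :=
  fun s s' => moveProb f s.2 s.1 s'.1 * switchProb p q s.2 s'.2

/-- `X` is (a version of) the MMAHH Markov chain with objective function `f` and switching
probabilities `p` and `q`, under the measure `μ`: each `X t` is measurable, and conditionally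
on any history, the next state is distributed according to `mmahhTrans`. -/
def IsMMAHH {n : ℕ} {Ω : Type*} [MeasurableSpace Ω] (μ : Measure Ω)
    (X : ℕ → Ω → Point n × Op) (f : Point n → ℝ) (p q : ℝ) : Prop :=
  (∀ t, Measurable (X t)) ∧
  ∀ (t : ℕ) (σ : ℕ → Point n × Op) (s' : Point n × Op),
    μ {ω | (∀ i ≤ t, X i ω = σ i) ∧ X (t + 1) ω = s'}
      = μ {ω | ∀ i ≤ t, X i ω = σ i} * mmahhTrans f p q (σ t) s'

/-- The runtime: the first hitting time of the global optimum, as an extended natural number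
(`⊤` if the optimum is never reached). -/
noncomputable def hitTime {n : ℕ} {Ω : Type*} (X : ℕ → Ω → Point n × Op) (ω : Ω) : ℕ∞ :=
  ⨅ t ∈ {t : ℕ | (X t ω).1 = optimum n}, (t : ℕ∞)

/-- The `k`-th switching time between the two acceptance operators (with junk value given by
`Nat.sInf ∅ = 0` on the probability-zero event that no further switch occurs). -/
noncomputable def switchTime {n : ℕ} {Ω : Type*} (X : ℕ → Ω → Point n × Op) : ℕ → Ω → ℕ
  | 0, _ => 0
  | k + 1, ω =>
      sInf {t : ℕ | switchTime X k ω ≤ t ∧ (X t ω).2 ≠ (X (switchTime X k ω) ω).2}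

/-- The OneMax benchmark. -/
noncomputable def OneMax (n : ℕ) (x : Point n) : ℝ := (ones x : ℝ)

/-! ### Auxiliary development -/

instance : Fintype Op := ⟨⟨{Op.OI, Op.AM}, by decide⟩, fun x => by cases x <;> decide⟩

instance : MeasurableSingletonClass Op := ⟨fun _ => MeasurableSpace.measurableSet_top⟩

section Comb
variable {n : ℕ}

lemma ones_le (x : Point n) : ones x ≤ n := by
  classical
  calc ones x ≤ (Finset.univ : Finset (Fin n)).card := Finset.card_filter_le _ _
  _ = n := by simp

lemma ones_flipBit (x : Point n) (v : Fin n) :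
    ones (flipBit x v) = if x v = true then ones x - 1 else ones x + 1 := by
  classical
  have hset : (Finset.univ.filter fun i => flipBit x v i = true)
      = if x v = true then (Finset.univ.filter fun i => x i = true).erase v
        else insert v (Finset.univ.filter fun i => x i = true) := by
    ext j
    by_cases hj : j = v <;> by_cases hv : x v = true <;>
      simp [flipBit, Function.update, hj, hv, Finset.mem_erase, Finset.mem_insert]
  by_cases hv : x v = true
  · have hmem : v ∈ Finset.univ.filter fun i => x i = true := by simp [hv]
    simp [ones, hset, hv, Finset.card_erase_of_mem hmem]
  · have hmem : v ∉ Finset.univ.filter fun i => x i = true := by simp [hv]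
    simp [ones, hset, hv, Finset.card_insert_of_notMem hmem]

lemma sum_ones_flipBit (x : Point n) :
    ∑ v : Fin n, (ones (flipBit x v) : ℝ) = ((n : ℝ) - 2) * ones x + n := by
  classical
  have hcard : (Finset.univ.filter fun i => x i = true).card = ones x := rfl
  rw [← Finset.sum_filter_add_sum_filter_not Finset.univ (fun v => x v = true)]
  have h1 : ∀ v ∈ Finset.univ.filter fun v => x v = true,
      (ones (flipBit x v) : ℝ) = (ones x : ℝ) - 1 := by
    intro v hv
    simp only [Finset.mem_filter] at hv
    have h1 : 1 ≤ ones x := by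
      have : v ∈ Finset.univ.filter fun i => x i = true := by simp [hv.2]
      have := Finset.card_pos.mpr ⟨v, this⟩
      omega
    rw [ones_flipBit, if_pos hv.2]
    push_cast [h1]; ring
  have h2 : ∀ v ∈ Finset.univ.filter fun v => ¬(x v = true),
      (ones (flipBit x v) : ℝ) = (ones x : ℝ) + 1 := by
    intro v hv
    simp only [Finset.mem_filter] at hv
    rw [ones_flipBit, if_neg hv.2]
    push_cast; ring
  rw [Finset.sum_congr rfl h1, Finset.sum_congr rfl h2, Finset.sum_const, Finset.sum_const]
  have hc2 : (Finset.univ.filter fun v => ¬(x v = true)).card = n - ones x := by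
    have := Finset.card_filter_add_card_filter_not (s := (Finset.univ : Finset (Fin n)))
      (p := fun v => x v = true)
    simp only [Finset.card_univ, Fintype.card_fin] at this
    omega
  have hle := ones_le x
  rw [hcard, hc2]
  have : ((n - ones x : ℕ) : ℝ) = (n : ℝ) - ones x := by
    push_cast [hle]; ring
  rw [nsmul_eq_mul, nsmul_eq_mul, this]
  ring

open Classical in
noncomputable def cnt (x x' : Point n) : ℕ :=
  (Finset.univ.filter fun v => flipBit x v = x').card

open Classical in
lemma sum_cnt_mul (x : Point n) (g : Point n → ℝ) :
    ∑ x' : Point n, (cnt x x' : ℝ) * g x' = ∑ v : Fin n, g (flipBit x v) := by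
  classical
  have := Finset.sum_fiberwise_of_maps_to (s := (Finset.univ : Finset (Fin n)))
    (t := (Finset.univ : Finset (Point n))) (g := fun v => flipBit x v)
    (fun v _ => Finset.mem_univ _) (fun v => g (flipBit x v))
  rw [← this]
  refine Finset.sum_congr rfl fun x' _ => ?_
  have h : ∑ v ∈ Finset.univ.filter (fun v => flipBit x v = x'), g (flipBit x v)
       = ∑ v ∈ Finset.univ.filter (fun v => flipBit x v = x'), g x' :=
    Finset.sum_congr rfl (fun v hv => by simp only [Finset.mem_filter] at hv; rw [hv.2])
  rw [h, Finset.sum_const, nsmul_eq_mul]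
  congr 2

lemma sum_cnt (x : Point n) : ∑ x' : Point n, (cnt x x' : ℝ) = n := by
  classical
  have := sum_cnt_mul x (fun _ => (1 : ℝ))
  simp only [mul_one, Finset.sum_const, Finset.card_univ, Fintype.card_fin,
    nsmul_eq_mul] at this
  simpa using this

lemma sum_cnt_ones (x : Point n) :
    ∑ x' : Point n, (cnt x x' : ℝ) * (ones x' : ℝ) = ((n : ℝ) - 2) * ones x + n := by
  rw [sum_cnt_mul x (fun x' => (ones x' : ℝ))]
  exact sum_ones_flipBit x

lemma moveProb_AM (f : Point n → ℝ) (x x' : Point n) :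
    moveProb f Op.AM x x' = (cnt x x' : ℝ≥0∞) / n := by
  classical
  simp only [moveProb, movedPoint, cnt]
  congr

end Comb

section Chain

variable {n : ℕ} {Ω : Type} [MeasurableSpace Ω]
variable (X : ℕ → Ω → Point n × Op) (x0 : Point n)

/-- all-AM history event ending at point `x`. -/
def Aev (t : ℕ) (x : Point n) : Set Ω :=
  {ω | X 0 ω = (x0, Op.AM) ∧ (∀ j ≤ t, (X j ω).2 = Op.AM) ∧ (X t ω).1 = x}

/-- AM phase of length `t+1` ending with a switch to OI at point `x`. -/
def Bev (t : ℕ) (x : Point n) : Set Ω :=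
  {ω | X 0 ω = (x0, Op.AM) ∧ (∀ j ≤ t, (X j ω).2 = Op.AM) ∧
    (X (t + 1) ω).2 = Op.OI ∧ (X (t + 1) ω).1 = x}

variable {X}

lemma measurableSet_snd_eq (hX : ∀ t, Measurable (X t)) (j : ℕ) (o : Op) :
    MeasurableSet {ω | (X j ω).2 = o} :=
  (hX j) ((measurable_snd (measurableSet_singleton o)))

lemma measurableSet_fst_eq (hX : ∀ t, Measurable (X t)) (j : ℕ) (x : Point n) :
    MeasurableSet {ω | (X j ω).1 = x} :=
  (hX j) ((measurable_fst (measurableSet_singleton x)))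

lemma measurableSet_eq_state (hX : ∀ t, Measurable (X t)) (j : ℕ) (s : Point n × Op) :
    MeasurableSet {ω | X j ω = s} :=
  (hX j) (measurableSet_singleton s)

lemma measurableSet_Aev (hX : ∀ t, Measurable (X t)) (t : ℕ) (x : Point n) :
    MeasurableSet (Aev X x0 t x) := by
  have : Aev X x0 t x = {ω | X 0 ω = (x0, Op.AM)} ∩
      ((⋂ j ∈ Set.Iic t, {ω | (X j ω).2 = Op.AM}) ∩ {ω | (X t ω).1 = x}) := by
    ext ω; simp [Aev, Set.mem_iInter]
  rw [this]
  exact (measurableSet_eq_state hX 0 _).inter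
    ((MeasurableSet.biInter (Set.to_countable _)
      (fun j _ => measurableSet_snd_eq hX j Op.AM)).inter (measurableSet_fst_eq hX t x))

lemma measurableSet_Bev (hX : ∀ t, Measurable (X t)) (t : ℕ) (x : Point n) :
    MeasurableSet (Bev X x0 t x) := by
  have : Bev X x0 t x = {ω | X 0 ω = (x0, Op.AM)} ∩
      ((⋂ j ∈ Set.Iic t, {ω | (X j ω).2 = Op.AM}) ∩
        ({ω | (X (t+1) ω).2 = Op.OI} ∩ {ω | (X (t+1) ω).1 = x})) := by
    ext ω; simp [Bev, Set.mem_iInter]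
  rw [this]
  exact (measurableSet_eq_state hX 0 _).inter
    ((MeasurableSet.biInter (Set.to_countable _)
      (fun j _ => measurableSet_snd_eq hX j Op.AM)).inter
      ((measurableSet_snd_eq hX (t+1) Op.OI).inter (measurableSet_fst_eq hX (t+1) x)))

variable (μ : Measure Ω) {f : Point n → ℝ} {p q : ℝ}

/-- The key consequence of the Markov property: the conditional step out of an
`Aev` history. -/
lemma key_step (hchain : IsMMAHH μ X f p q) (t : ℕ) (x : Point n) (s' : Point n × Op) :
    μ (Aev X x0 t x ∩ {ω | X (t + 1) ω = s'})
      = μ (Aev X x0 t x) * mmahhTrans f p q (x, Op.AM) s' := by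
  classical
  set ext : (Fin (t+1) → Point n × Op) → ℕ → Point n × Op :=
    fun τ j => if h : j < t + 1 then τ ⟨j, h⟩ else (x0, Op.AM) with hext
  set cyl : (Fin (t+1) → Point n × Op) → Set Ω :=
    fun τ => {ω | ∀ j ≤ t, X j ω = ext τ j} with hcyl
  have mem_cyl : ∀ τ ω, ω ∈ cyl τ ↔ ∀ j : Fin (t+1), X (j : ℕ) ω = τ j := by
    intro τ ω
    constructor
    · intro h j
      have hj : (j : ℕ) < t + 1 := j.isLt
      have := h (j : ℕ) (Nat.lt_succ_iff.mp hj)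
      simpa [hext, hj, Nat.lt_succ_iff.mp hj] using this
    · intro h j hj
      have h2 : j < t + 1 := Nat.lt_succ_iff.mpr hj
      have := h ⟨j, h2⟩
      simpa [hext, h2, hj] using this
  set Q : Finset (Fin (t+1) → Point n × Op) :=
    Finset.univ.filter fun τ => τ 0 = (x0, Op.AM) ∧ (∀ j, (τ j).2 = Op.AM) ∧
      (τ (Fin.last t)).1 = x with hQ
  have hA : Aev X x0 t x = ⋃ τ ∈ Q, cyl τ := by
    ext ω
    simp only [Set.mem_iUnion, Aev, Set.mem_setOf_eq, hQ, Finset.mem_filter,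
      Finset.mem_univ, true_and, exists_prop]
    constructor
    · rintro ⟨h0, hAM, hx⟩
      refine ⟨fun j => X (j : ℕ) ω, ⟨?_, ?_, ?_⟩, (mem_cyl _ _).mpr fun j => rfl⟩
      · simpa using h0
      · intro j; exact hAM (j : ℕ) (Nat.lt_succ_iff.mp j.isLt)
      · simpa using hx
    · rintro ⟨τ, ⟨h0, hAM, hx⟩, hω⟩
      rw [mem_cyl] at hω
      refine ⟨?_, ?_, ?_⟩
      · have := hω 0; simpa [h0] using this
      · intro j hj
        have h2 : j < t + 1 := Nat.lt_succ_iff.mpr hj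
        have := hω ⟨j, h2⟩
        rw [show X j ω = τ ⟨j, h2⟩ from this]
        exact hAM _
      · have := hω (Fin.last t)
        simp only [Fin.val_last] at this
        rw [this]; exact hx
  have hdisj : ∀ τ ∈ Q, ∀ τ' ∈ Q, τ ≠ τ' → Disjoint (cyl τ) (cyl τ') := by
    intro τ _ τ' _ hne
    rw [Set.disjoint_left]
    intro ω h1 h2
    rw [mem_cyl] at h1 h2
    exact hne (funext fun j => (h1 j).symm.trans (h2 j))
  have hmeas_cyl : ∀ τ, MeasurableSet (cyl τ) := by
    intro τ
    have : cyl τ = ⋂ j ∈ Set.Iic t, {ω | X j ω = ext τ j} := by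
      ext ω; simp [hcyl, Set.mem_iInter]
    rw [this]
    exact MeasurableSet.biInter (Set.to_countable _)
      (fun j _ => measurableSet_eq_state hchain.1 j _)
  have hPdisj : Set.PairwiseDisjoint (↑Q : Set _) cyl := by
    intro τ h1 τ' h2 hne
    exact hdisj τ (by exact_mod_cast h1) τ' (by exact_mod_cast h2) hne
  have hPdisj2 : Set.PairwiseDisjoint (↑Q : Set _)
      (fun τ => cyl τ ∩ {ω | X (t + 1) ω = s'}) := by
    intro τ h1 τ' h2 hne
    exact Disjoint.mono Set.inter_subset_left Set.inter_subset_left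
      (hdisj τ (by exact_mod_cast h1) τ' (by exact_mod_cast h2) hne)
  have hinter : Aev X x0 t x ∩ {ω | X (t + 1) ω = s'}
      = ⋃ τ ∈ Q, (cyl τ ∩ {ω | X (t + 1) ω = s'}) := by
    rw [hA, Set.iUnion₂_inter]
  have hterm : ∀ τ ∈ Q, μ (cyl τ ∩ {ω | X (t + 1) ω = s'})
      = μ (cyl τ) * mmahhTrans f p q (x, Op.AM) s' := by
    intro τ hτ
    have hch := hchain.2 t (ext τ) s'
    have hset : {ω | (∀ i ≤ t, X i ω = ext τ i) ∧ X (t + 1) ω = s'}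
        = cyl τ ∩ {ω | X (t + 1) ω = s'} := by
      ext ω; simp [hcyl, Set.mem_inter_iff, Set.mem_setOf_eq]
    have hlast : ext τ t = (x, Op.AM) := by
      simp only [hQ, Finset.mem_filter, Finset.mem_univ, true_and] at hτ
      have hlt : t < t + 1 := Nat.lt_succ_self t
      have : ext τ t = τ ⟨t, hlt⟩ := by simp [hext, hlt]
      rw [this]
      have : (⟨t, hlt⟩ : Fin (t+1)) = Fin.last t := rfl
      rw [this]
      exact Prod.ext hτ.2.2 (hτ.2.1 _)
    rw [hset, hlast] at hch
    exact hch
  rw [hinter, measure_biUnion_finset hPdisj2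
      (fun τ _ => (hmeas_cyl τ).inter (measurableSet_eq_state hchain.1 (t+1) s')),
    Finset.sum_congr rfl hterm, ← Finset.sum_mul,
    ← measure_biUnion_finset hPdisj (fun τ _ => hmeas_cyl τ), ← hA]

lemma Aev_succ (t : ℕ) (x' : Point n) :
    Aev X x0 (t + 1) x' = ⋃ x : Point n, (Aev X x0 t x ∩ {ω | X (t + 1) ω = (x', Op.AM)}) := by
  ext ω
  simp only [Aev, Set.mem_iUnion, Set.mem_inter_iff, Set.mem_setOf_eq]
  constructor
  · rintro ⟨h0, hAM, hx⟩
    refine ⟨(X t ω).1, ⟨h0, fun j hj => hAM j (by omega), rfl⟩, ?_⟩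
    exact Prod.ext hx (hAM (t+1) le_rfl)
  · rintro ⟨x, ⟨h0, hAM, _⟩, hstep⟩
    refine ⟨h0, fun j hj => ?_, by rw [hstep]⟩
    rcases Nat.lt_or_ge j (t+1) with h | h
    · exact hAM j (by omega)
    · have : j = t + 1 := by omega
      rw [this, hstep]

lemma Bev_eq (t : ℕ) (x' : Point n) :
    Bev X x0 t x' = ⋃ x : Point n, (Aev X x0 t x ∩ {ω | X (t + 1) ω = (x', Op.OI)}) := by
  ext ω
  simp only [Bev, Aev, Set.mem_iUnion, Set.mem_inter_iff, Set.mem_setOf_eq]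
  constructor
  · rintro ⟨h0, hAM, ho, hx⟩
    exact ⟨(X t ω).1, ⟨h0, hAM, rfl⟩, Prod.ext hx ho⟩
  · rintro ⟨x, ⟨h0, hAM, _⟩, hstep⟩
    exact ⟨h0, hAM, by rw [hstep], by rw [hstep]⟩

lemma Aev_disjoint (t : ℕ) : ∀ x y : Point n, x ≠ y →
    Disjoint (Aev X x0 t x) (Aev X x0 t y) := by
  intro x y hne
  rw [Set.disjoint_left]
  rintro ω ⟨_, _, hx⟩ ⟨_, _, hy⟩
  exact hne (hx.symm.trans hy)

lemma measure_union_step (hchain : IsMMAHH μ X f p q) (t : ℕ) (s' : Point n × Op) :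
    μ (⋃ x : Point n, (Aev X x0 t x ∩ {ω | X (t + 1) ω = s'}))
      = ∑ x : Point n, μ (Aev X x0 t x) * mmahhTrans f p q (x, Op.AM) s' := by
  classical
  have hre : (⋃ x : Point n, (Aev X x0 t x ∩ {ω | X (t + 1) ω = s'}))
      = ⋃ x ∈ (Finset.univ : Finset (Point n)),
          (Aev X x0 t x ∩ {ω | X (t + 1) ω = s'}) := by
    simp
  rw [hre, measure_biUnion_finset]
  · exact Finset.sum_congr rfl fun x _ => key_step x0 μ hchain t x s'
  · intro x _ y _ hne
    exact Disjoint.mono Set.inter_subset_left Set.inter_subset_left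
      (Aev_disjoint x0 t x y hne)
  · intro x _
    exact (measurableSet_Aev x0 hchain.1 t x).inter
      (measurableSet_eq_state hchain.1 (t+1) s')

lemma measure_Aev_succ (hchain : IsMMAHH μ X f p q) (t : ℕ) (x' : Point n) :
    μ (Aev X x0 (t + 1) x')
      = ∑ x : Point n, μ (Aev X x0 t x) * mmahhTrans f p q (x, Op.AM) (x', Op.AM) := by
  rw [Aev_succ, measure_union_step x0 μ hchain]

lemma measure_Bev (hchain : IsMMAHH μ X f p q) (t : ℕ) (x' : Point n) :
    μ (Bev X x0 t x')
      = ∑ x : Point n, μ (Aev X x0 t x) * mmahhTrans f p q (x, Op.AM) (x', Op.OI) := by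
  rw [Bev_eq, measure_union_step x0 μ hchain]

lemma trans_AM (x x' : Point n) (o : Op) :
    mmahhTrans f p q (x, Op.AM) (x', o)
      = (cnt x x' : ℝ≥0∞) / n * switchProb p q Op.AM o := by
  simp [mmahhTrans, moveProb_AM]

lemma trans_AM_ne_top (hn0 : n ≠ 0) (x x' : Point n) (o : Op) :
    mmahhTrans f p q (x, Op.AM) (x', o) ≠ ⊤ := by
  rw [trans_AM]
  refine ENNReal.mul_ne_top ?_ ?_
  · exact (ENNReal.div_lt_top (ENNReal.natCast_ne_top _) (by exact_mod_cast hn0)).ne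
  · cases o <;> simp [switchProb]

lemma toReal_trans_AM_AM (hq1 : q ≤ 1) (x x' : Point n) :
    (mmahhTrans f p q (x, Op.AM) (x', Op.AM)).toReal = (cnt x x' : ℝ) / n * (1 - q) := by
  rw [trans_AM]
  simp only [switchProb]
  rw [ENNReal.toReal_mul, ENNReal.toReal_div, ENNReal.toReal_ofReal (by linarith)]
  simp

lemma toReal_trans_AM_OI (hq0 : 0 ≤ q) (x x' : Point n) :
    (mmahhTrans f p q (x, Op.AM) (x', Op.OI)).toReal = (cnt x x' : ℝ) / n * q := by
  rw [trans_AM]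
  simp only [switchProb]
  rw [ENNReal.toReal_mul, ENNReal.toReal_div, ENNReal.toReal_ofReal hq0]
  simp

/-- Abstract one-step sum identity for the `Aev` masses, against a test function `g`. -/
lemma sum_toReal_Aev_succ_mul [IsFiniteMeasure μ] (hchain : IsMMAHH μ X f p q)
    (hn0 : n ≠ 0) (hq1 : q ≤ 1) (t : ℕ) (g : Point n → ℝ) :
    ∑ x' : Point n, (μ (Aev X x0 (t + 1) x')).toReal * g x'
      = (1 - q) / n * ∑ x : Point n,
          (μ (Aev X x0 t x)).toReal * ∑ v : Fin n, g (flipBit x v) := by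
  classical
  have hper : ∀ x' : Point n, (μ (Aev X x0 (t + 1) x')).toReal
      = ∑ x : Point n, (μ (Aev X x0 t x)).toReal * ((cnt x x' : ℝ) / n * (1 - q)) := by
    intro x'
    rw [measure_Aev_succ x0 μ hchain, ENNReal.toReal_sum
      (fun x _ => ENNReal.mul_ne_top (measure_ne_top μ _) (trans_AM_ne_top hn0 x x' _))]
    exact Finset.sum_congr rfl fun x _ => by
      rw [ENNReal.toReal_mul, toReal_trans_AM_AM hq1]
  calc ∑ x' : Point n, (μ (Aev X x0 (t + 1) x')).toReal * g x'
      = ∑ x' : Point n, ∑ x : Point n,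
          (μ (Aev X x0 t x)).toReal * ((cnt x x' : ℝ) / n * (1 - q)) * g x' := by
        exact Finset.sum_congr rfl fun x' _ => by rw [hper x', Finset.sum_mul]
    _ = ∑ x : Point n, ∑ x' : Point n,
          (1 - q) / n * ((μ (Aev X x0 t x)).toReal * ((cnt x x' : ℝ) * g x')) := by
        rw [Finset.sum_comm]
        exact Finset.sum_congr rfl fun x _ => Finset.sum_congr rfl fun x' _ => by ring
    _ = (1 - q) / n * ∑ x : Point n,
          (μ (Aev X x0 t x)).toReal * ∑ v : Fin n, g (flipBit x v) := by
        rw [Finset.mul_sum]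
        refine Finset.sum_congr rfl fun x _ => ?_
        rw [← Finset.mul_sum, ← Finset.mul_sum, sum_cnt_mul]

/-- Abstract sum identity for the `Bev` masses, against a test function `g`. -/
lemma sum_toReal_Bev_mul [IsFiniteMeasure μ] (hchain : IsMMAHH μ X f p q)
    (hn0 : n ≠ 0) (hq0 : 0 ≤ q) (t : ℕ) (g : Point n → ℝ) :
    ∑ x' : Point n, (μ (Bev X x0 t x')).toReal * g x'
      = q / n * ∑ x : Point n,
          (μ (Aev X x0 t x)).toReal * ∑ v : Fin n, g (flipBit x v) := by
  classical
  have hper : ∀ x' : Point n, (μ (Bev X x0 t x')).toReal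
      = ∑ x : Point n, (μ (Aev X x0 t x)).toReal * ((cnt x x' : ℝ) / n * q) := by
    intro x'
    rw [measure_Bev x0 μ hchain, ENNReal.toReal_sum
      (fun x _ => ENNReal.mul_ne_top (measure_ne_top μ _) (trans_AM_ne_top hn0 x x' _))]
    exact Finset.sum_congr rfl fun x _ => by
      rw [ENNReal.toReal_mul, toReal_trans_AM_OI hq0]
  calc ∑ x' : Point n, (μ (Bev X x0 t x')).toReal * g x'
      = ∑ x' : Point n, ∑ x : Point n,
          (μ (Aev X x0 t x)).toReal * ((cnt x x' : ℝ) / n * q) * g x' := by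
        exact Finset.sum_congr rfl fun x' _ => by rw [hper x', Finset.sum_mul]
    _ = ∑ x : Point n, ∑ x' : Point n,
          q / n * ((μ (Aev X x0 t x)).toReal * ((cnt x x' : ℝ) * g x')) := by
        rw [Finset.sum_comm]
        exact Finset.sum_congr rfl fun x _ => Finset.sum_congr rfl fun x' _ => by ring
    _ = q / n * ∑ x : Point n,
          (μ (Aev X x0 t x)).toReal * ∑ v : Fin n, g (flipBit x v) := by
        rw [Finset.mul_sum]
        refine Finset.sum_congr rfl fun x _ => ?_
        rw [← Finset.mul_sum, ← Finset.mul_sum, sum_cnt_mul]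

lemma measure_Aev_zero (hinit : μ {ω | X 0 ω = (x0, Op.AM)} = 1) (x : Point n) :
    μ (Aev X x0 0 x) = if x = x0 then 1 else 0 := by
  by_cases hx : x = x0
  · have : Aev X x0 0 x = {ω | X 0 ω = (x0, Op.AM)} := by
      ext ω
      simp only [Aev, Set.mem_setOf_eq]
      constructor
      · rintro ⟨h, _, _⟩; exact h
      · intro h
        refine ⟨h, fun j hj => ?_, ?_⟩
        · have hj0 : j = 0 := Nat.le_zero.mp hj
          rw [hj0, h]
        · rw [h, hx]
    rw [this, hinit, if_pos hx]
  · have : Aev X x0 0 x = ∅ := by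
      ext ω
      simp only [Aev, Set.mem_setOf_eq, Set.mem_empty_iff_false, iff_false]
      rintro ⟨h0, _, hx'⟩
      exact hx (by rw [← hx', h0])
    rw [this, if_neg hx]
    exact measure_empty

lemma M_closed (hprob : IsProbabilityMeasure μ) (hchain : IsMMAHH μ X f p q)
    (hinit : μ {ω | X 0 ω = (x0, Op.AM)} = 1) (hn0 : n ≠ 0) (hq1 : q ≤ 1) (t : ℕ) :
    ∑ x : Point n, (μ (Aev X x0 t x)).toReal = (1 - q) ^ t := by
  classical
  induction t with
  | zero =>
    simp only [pow_zero]
    have : ∀ x : Point n, (μ (Aev X x0 0 x)).toReal = if x = x0 then 1 else 0 := by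
      intro x
      rw [measure_Aev_zero x0 μ hinit]
      split <;> simp
    rw [Finset.sum_congr rfl fun x _ => this x]
    simp
  | succ t ih =>
    have h := sum_toReal_Aev_succ_mul x0 μ hchain hn0 hq1 t (fun _ => (1 : ℝ))
    simp only [mul_one, Finset.sum_const, Finset.card_univ, Fintype.card_fin,
      nsmul_eq_mul] at h
    rw [h]
    have : ∑ x : Point n, (μ (Aev X x0 t x)).toReal * (n : ℝ)
        = (n : ℝ) * ∑ x : Point n, (μ (Aev X x0 t x)).toReal := by
      rw [Finset.mul_sum]; exact Finset.sum_congr rfl fun x _ => by ring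
    rw [this, ih]
    have hnne : (n : ℝ) ≠ 0 := Nat.cast_ne_zero.mpr hn0
    field_simp
    ring

lemma Y_closed (hprob : IsProbabilityMeasure μ) (hchain : IsMMAHH μ X f p q)
    (hinit : μ {ω | X 0 ω = (x0, Op.AM)} = 1) (hn0 : n ≠ 0) (hq1 : q ≤ 1) (t : ℕ) :
    ∑ x : Point n, (μ (Aev X x0 t x)).toReal * (ones x : ℝ)
      = (1 - q) ^ t * ((n : ℝ) / 2
          + ((ones x0 : ℝ) - (n : ℝ) / 2) * (((n : ℝ) - 2) / n) ^ t) := by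
  classical
  have hnne : (n : ℝ) ≠ 0 := Nat.cast_ne_zero.mpr hn0
  induction t with
  | zero =>
    have : ∀ x : Point n, (μ (Aev X x0 0 x)).toReal * (ones x : ℝ)
        = if x = x0 then (ones x : ℝ) else 0 := by
      intro x
      rw [measure_Aev_zero x0 μ hinit]
      split <;> simp
    rw [Finset.sum_congr rfl fun x _ => this x, Finset.sum_ite_eq' Finset.univ x0]
    simp only [Finset.mem_univ, if_true, pow_zero, one_mul]
    ring
  | succ t ih =>
    have h := sum_toReal_Aev_succ_mul x0 μ hchain hn0 hq1 t (fun x => (ones x : ℝ))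
    rw [h, Finset.sum_congr rfl (fun x (_ : x ∈ Finset.univ) => by
      rw [sum_ones_flipBit x])]
    have hsplit : ∑ x : Point n,
        (μ (Aev X x0 t x)).toReal * (((n : ℝ) - 2) * (ones x : ℝ) + (n : ℝ))
        = ((n : ℝ) - 2) * (∑ x : Point n, (μ (Aev X x0 t x)).toReal * (ones x : ℝ))
          + (n : ℝ) * ∑ x : Point n, (μ (Aev X x0 t x)).toReal := by
      rw [Finset.mul_sum, Finset.mul_sum, ← Finset.sum_add_distrib]
      exact Finset.sum_congr rfl fun x _ => by ring
    rw [hsplit, ih, M_closed x0 μ hprob hchain hinit hn0 hq1]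
    simp only [div_pow]
    field_simp
    ring

/-- Closed form of the drift contribution of phase length `t+1`. -/
lemma W_closed (hprob : IsProbabilityMeasure μ) (hchain : IsMMAHH μ X f p q)
    (hinit : μ {ω | X 0 ω = (x0, Op.AM)} = 1) (hn0 : n ≠ 0) (hq0 : 0 ≤ q) (hq1 : q ≤ 1)
    (i : ℕ) (hone : (ones x0 : ℝ) = (n : ℝ) - i) (t : ℕ) :
    ∑ x : Point n, (μ (Bev X x0 t x)).toReal * ((i : ℝ) - ((n : ℝ) - (ones x : ℝ)))
      = q * ((2 * (i : ℝ) - n) / 2) * (1 - q) ^ t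
        + q * ((n : ℝ) - 2) * ((n : ℝ) - 2 * (i : ℝ)) / (2 * n)
          * ((1 - q) * (((n : ℝ) - 2) / n)) ^ t := by
  classical
  have hnne : (n : ℝ) ≠ 0 := Nat.cast_ne_zero.mpr hn0
  have h := sum_toReal_Bev_mul x0 μ hchain hn0 hq0 t
    (fun x => (i : ℝ) - ((n : ℝ) - (ones x : ℝ)))
  rw [h, Finset.sum_congr rfl (fun x (_ : x ∈ Finset.univ) => by
    rw [show ∑ v : Fin n, ((i : ℝ) - ((n : ℝ) - (ones (flipBit x v) : ℝ)))
        = (n : ℝ) * ((i : ℝ) - (n : ℝ)) + (((n : ℝ) - 2) * (ones x : ℝ) + (n : ℝ)) from by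
      rw [Finset.sum_congr rfl (fun v (_ : v ∈ Finset.univ) =>
        show (i : ℝ) - ((n : ℝ) - (ones (flipBit x v) : ℝ))
          = ((i : ℝ) - (n : ℝ)) + (ones (flipBit x v) : ℝ) from by ring),
        Finset.sum_add_distrib, sum_ones_flipBit x]
      simp only [Finset.sum_const, Finset.card_univ, Fintype.card_fin, nsmul_eq_mul]
      try ring])]
  have hsplit : ∑ x : Point n, (μ (Aev X x0 t x)).toReal
        * ((n : ℝ) * ((i : ℝ) - (n : ℝ)) + (((n : ℝ) - 2) * (ones x : ℝ) + (n : ℝ)))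
      = ((n : ℝ) * ((i : ℝ) - (n : ℝ)) + (n : ℝ)) * (∑ x : Point n, (μ (Aev X x0 t x)).toReal)
        + ((n : ℝ) - 2) * ∑ x : Point n, (μ (Aev X x0 t x)).toReal * (ones x : ℝ) := by
    rw [Finset.mul_sum, Finset.mul_sum, ← Finset.sum_add_distrib]
    exact Finset.sum_congr rfl fun x _ => by ring
  rw [hsplit, M_closed x0 μ hprob hchain hinit hn0 hq1,
    Y_closed x0 μ hprob hchain hinit hn0 hq1, hone, mul_pow]
  field_simp
  ring

end Chain

section Helpers

lemma sInf_eq_succ_iff (S : Set ℕ) (t : ℕ) :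
    sInf S = t + 1 ↔ (t + 1 ∈ S ∧ ∀ j ≤ t, j ∉ S) := by
  constructor
  · intro h
    have hne : S.Nonempty := by
      by_contra hS
      rw [Set.not_nonempty_iff_eq_empty] at hS
      rw [hS, Nat.sInf_empty] at h
      omega
    have hmem := Nat.sInf_mem hne
    rw [h] at hmem
    refine ⟨hmem, fun j hj hjS => ?_⟩
    have := Nat.sInf_le hjS
    omega
  · rintro ⟨h1, h2⟩
    have hle := Nat.sInf_le h1
    have hmem := Nat.sInf_mem ⟨t + 1, h1⟩
    rcases Nat.lt_or_ge (sInf S) (t + 1) with h | h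
    · exact absurd hmem (h2 _ (by omega))
    · omega

lemma measurable_comp_nat {Ω α : Type*} [MeasurableSpace Ω] [MeasurableSpace α]
    (F : ℕ → Ω → α) (hF : ∀ t, Measurable (F t)) (σ : Ω → ℕ) (hσ : Measurable σ) :
    Measurable fun ω => F (σ ω) ω := by
  intro s hs
  have : (fun ω => F (σ ω) ω) ⁻¹' s = ⋃ t : ℕ, (σ ⁻¹' {t} ∩ (F t) ⁻¹' s) := by
    ext ω
    simp only [Set.mem_preimage, Set.mem_iUnion, Set.mem_inter_iff, Set.mem_singleton_iff]
    constructor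
    · intro h; exact ⟨σ ω, rfl, h⟩
    · rintro ⟨t, ht, h⟩; rw [← ht] at h; exact h
  rw [this]
  exact MeasurableSet.iUnion fun t => (hσ (measurableSet_singleton t)).inter (hF t hs)

lemma tsum_geom_combo (n : ℕ) (hn : 2 ≤ n) (q : ℝ) (hq0 : 0 < q) (hq1 : q < 1) (i : ℝ) :
    ∑' t : ℕ, (q * ((2 * i - n) / 2) * (1 - q) ^ t
        + q * ((n : ℝ) - 2) * ((n : ℝ) - 2 * i) / (2 * n)
          * ((1 - q) * (((n : ℝ) - 2) / n)) ^ t)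
      = (2 * i - n) / (2 + q * ((n : ℝ) - 2)) := by
  have hn0 : (0 : ℝ) < n := by positivity
  have hn2 : (2 : ℝ) ≤ n := by exact_mod_cast hn
  have hs0 : (0 : ℝ) ≤ 1 - q := by linarith
  have hs1 : 1 - q < 1 := by linarith
  have hr0 : (0 : ℝ) ≤ ((n : ℝ) - 2) / n := div_nonneg (by linarith) (le_of_lt hn0)
  have hr1 : ((n : ℝ) - 2) / n < 1 := by
    rw [div_lt_one hn0]; linarith
  have hsr0 : (0 : ℝ) ≤ (1 - q) * (((n : ℝ) - 2) / n) := by positivity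
  have hsr1 : (1 - q) * (((n : ℝ) - 2) / n) < 1 := by nlinarith
  rw [Summable.tsum_add ((summable_geometric_of_lt_one hs0 hs1).mul_left _)
      ((summable_geometric_of_lt_one hsr0 hsr1).mul_left _),
    tsum_mul_left, tsum_mul_left, tsum_geometric_of_lt_one hs0 hs1,
    tsum_geometric_of_lt_one hsr0 hsr1]
  have h1 : 1 - (1 - q) = q := by ring
  have h2 : (0 : ℝ) < 1 - (1 - q) * (((n : ℝ) - 2) / n) := by linarith
  have h3 : (0 : ℝ) < 2 + q * ((n : ℝ) - 2) := by nlinarith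
  have h4 : 1 - (1 - q) * (((n : ℝ) - 2) / n) = (2 + q * ((n : ℝ) - 2)) / n := by
    field_simp
    ring
  rw [h1, h4]
  rw [inv_div]
  field_simp
  ring

end Helpers

section Main

variable {n : ℕ} {Ω : Type} [MeasurableSpace Ω] {X : ℕ → Ω → Point n × Op} (x0 : Point n)
variable (μ : Measure Ω) {f : Point n → ℝ} {p q : ℝ}

lemma switchTime_one (ω : Ω) :
    switchTime X 1 ω = sInf {s : ℕ | 0 ≤ s ∧ (X s ω).2 ≠ (X 0 ω).2} := rfl

lemma switchTime_eq_on_Bev {t : ℕ} {x : Point n} {ω : Ω} (hω : ω ∈ Bev X x0 t x) :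
    switchTime X 1 ω = t + 1 := by
  obtain ⟨h0, hAM, hOI, _⟩ := hω
  have h02 : (X 0 ω).2 = Op.AM := by rw [h0]
  rw [switchTime_one, sInf_eq_succ_iff]
  constructor
  · refine ⟨Nat.zero_le _, ?_⟩
    rw [hOI, h02]
    simp
  · intro j hj hmem
    exact hmem.2 (by rw [hAM j hj, h02])

lemma Bev_pairwise_disjoint :
    Pairwise (Function.onFun Disjoint fun pr : ℕ × Point n => Bev X x0 pr.1 pr.2) := by
  intro pr pr' hne
  rw [Function.onFun, Set.disjoint_left]
  intro ω hω hω'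
  apply hne
  have h1 := switchTime_eq_on_Bev x0 hω
  have h2 := switchTime_eq_on_Bev x0 hω'
  have ht : pr.1 = pr'.1 := by omega
  have hx : pr.2 = pr'.2 := by
    have e1 := hω.2.2.2
    have e2 := hω'.2.2.2
    rw [← ht] at e2
    rw [← e1, ← e2]
  exact Prod.ext ht hx

lemma measurable_snd_pair (hX : ∀ t, Measurable (X t)) (j : ℕ) :
    MeasurableSet {ω | (X j ω).2 = (X 0 ω).2} := by
  have : {ω | (X j ω).2 = (X 0 ω).2}
      = ⋃ o : Op, ({ω | (X j ω).2 = o} ∩ {ω | (X 0 ω).2 = o}) := by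
    ext ω
    simp only [Set.mem_setOf_eq, Set.mem_iUnion, Set.mem_inter_iff]
    constructor
    · intro h; exact ⟨(X 0 ω).2, h, rfl⟩
    · rintro ⟨o, h1, h2⟩; rw [h1, h2]
  rw [this]
  exact MeasurableSet.iUnion fun o =>
    (measurableSet_snd_eq hX j o).inter (measurableSet_snd_eq hX 0 o)

lemma measurable_switchTime1 (hX : ∀ t, Measurable (X t)) :
    Measurable fun ω => switchTime X 1 ω := by
  apply measurable_to_countable'
  intro t
  match t with
  | 0 =>
    have hset : (fun ω => switchTime X 1 ω) ⁻¹' {0}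
        = ⋂ j : ℕ, {ω | (X j ω).2 = (X 0 ω).2} := by
      ext ω
      simp only [Set.mem_preimage, Set.mem_singleton_iff, switchTime_one, Set.mem_iInter,
        Set.mem_setOf_eq, Nat.sInf_eq_zero]
      constructor
      · rintro (⟨_, h⟩ | h) j
        · exact absurd rfl h
        · by_contra hj
          have : j ∈ {s : ℕ | 0 ≤ s ∧ (X s ω).2 ≠ (X 0 ω).2} := ⟨Nat.zero_le _, hj⟩
          rw [h] at this
          exact this
      · intro h
        right
        ext j
        simp only [Set.mem_setOf_eq, Set.mem_empty_iff_false, iff_false, not_and]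
        intro _
        rw [h j]
        simp
    rw [hset]
    exact MeasurableSet.iInter fun j => measurable_snd_pair hX j
  | t + 1 =>
    have hset : (fun ω => switchTime X 1 ω) ⁻¹' {t + 1}
        = {ω | (X (t+1) ω).2 = (X 0 ω).2}ᶜ ∩ ⋂ j ∈ Set.Iic t, {ω | (X j ω).2 = (X 0 ω).2} := by
      ext ω
      simp only [Set.mem_preimage, Set.mem_singleton_iff, switchTime_one, sInf_eq_succ_iff,
        Set.mem_inter_iff, Set.mem_compl_iff, Set.mem_setOf_eq, Set.mem_iInter, Set.mem_Iic]
      constructor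
      · rintro ⟨⟨_, h1⟩, h2⟩
        refine ⟨h1, fun j hj => ?_⟩
        by_contra hj'
        exact h2 j hj ⟨Nat.zero_le _, hj'⟩
      · rintro ⟨h1, h2⟩
        exact ⟨⟨Nat.zero_le _, h1⟩, fun j hj hmem => hmem.2 (h2 j hj)⟩
    rw [hset]
    exact ((measurable_snd_pair hX (t+1)).compl).inter
      (MeasurableSet.biInter (Set.to_countable _) fun j _ => measurable_snd_pair hX j)

lemma measurable_integrand (hX : ∀ t, Measurable (X t)) :
    Measurable fun ω => ((n : ℝ) - (ones (X 0 ω).1 : ℝ))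
      - ((n : ℝ) - (ones (X (switchTime X 1 ω) ω).1 : ℝ)) := by
  have h1 : Measurable fun ω => (n : ℝ) - (ones (X 0 ω).1 : ℝ) :=
    measurable_const.sub
      ((measurable_of_countable fun s : Point n × Op => (ones s.1 : ℝ)).comp (hX 0))
  have h2 : Measurable fun ω => (n : ℝ) - (ones (X (switchTime X 1 ω) ω).1 : ℝ) := by
    refine measurable_comp_nat (fun t ω => (n : ℝ) - (ones (X t ω).1 : ℝ)) ?_ _
      (measurable_switchTime1 hX)
    intro t
    exact measurable_const.sub
      ((measurable_of_countable fun s : Point n × Op => (ones s.1 : ℝ)).comp (hX t))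
  exact h1.sub h2

lemma compl_Bev_null (hprob : IsProbabilityMeasure μ) (hchain : IsMMAHH μ X f p q)
    (hinit : μ {ω | X 0 ω = (x0, Op.AM)} = 1) (hn0 : n ≠ 0) (hq0 : 0 < q) (hq1 : q < 1) :
    μ (⋃ pr : ℕ × Point n, Bev X x0 pr.1 pr.2)ᶜ = 0 := by
  classical
  haveI := hprob
  set N1 := {ω | X 0 ω = (x0, Op.AM)}ᶜ with hN1def
  set N2 := ⋂ t : ℕ, ⋃ x : Point n, Aev X x0 t x with hN2def
  have hsub : (⋃ pr : ℕ × Point n, Bev X x0 pr.1 pr.2)ᶜ ⊆ N1 ∪ N2 := by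
    intro ω hω
    simp only [Set.mem_compl_iff, Set.mem_iUnion, not_exists] at hω
    by_cases h0 : X 0 ω = (x0, Op.AM)
    · right
      by_cases hall : ∀ j : ℕ, (X j ω).2 = Op.AM
      · simp only [hN2def, Set.mem_iInter, Set.mem_iUnion]
        intro t
        exact ⟨(X t ω).1, h0, fun j _ => hall j, rfl⟩
      · exfalso
        push_neg at hall
        set D := {j : ℕ | (X j ω).2 ≠ Op.AM} with hD
        have hne : D.Nonempty := hall
        have hmem := Nat.sInf_mem hne
        have h02 : (X 0 ω).2 = Op.AM := by rw [h0]
        have hpos : sInf D ≠ 0 := by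
          intro h
          rw [h] at hmem
          exact hmem h02
        obtain ⟨k, hk⟩ : ∃ k, sInf D = k + 1 := ⟨sInf D - 1, by omega⟩
        apply hω (k, (X (k+1) ω).1)
        refine ⟨h0, fun j hj => ?_, ?_, rfl⟩
        · by_contra hj'
          have := Nat.sInf_le (show j ∈ D from hj')
          omega
        · have hOI : (X (k+1) ω).2 ≠ Op.AM := by rw [← hk]; exact hmem
          cases hop : (X (k+1) ω).2
          · rfl
          · exact absurd hop hOI
    · left; exact h0
  have hN1 : μ N1 = 0 := by
    rw [hN1def, prob_compl_eq_zero_iff (measurableSet_eq_state hchain.1 0 _)]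
    exact hinit
  have hN2 : μ N2 = 0 := by
    have hb : ∀ t : ℕ, μ N2 ≤ ENNReal.ofReal ((1 - q) ^ t) := by
      intro t
      have h1 : N2 ⊆ ⋃ x ∈ (Finset.univ : Finset (Point n)), Aev X x0 t x := by
        intro ω hω
        simp only [hN2def, Set.mem_iInter] at hω
        simpa using hω t
      calc μ N2 ≤ μ (⋃ x ∈ (Finset.univ : Finset (Point n)), Aev X x0 t x) := measure_mono h1
        _ = ∑ x : Point n, μ (Aev X x0 t x) := by
            refine measure_biUnion_finset ?_ ?_
            · intro x _ y _ hxy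
              exact Aev_disjoint x0 t x y hxy
            · intro x _
              exact measurableSet_Aev x0 hchain.1 t x
        _ = ENNReal.ofReal ((1 - q) ^ t) := by
            have hne : ∑ x : Point n, μ (Aev X x0 t x) ≠ ⊤ :=
              ENNReal.sum_ne_top.mpr fun x _ => measure_ne_top μ _
            have heq : (∑ x : Point n, μ (Aev X x0 t x)).toReal = (1 - q) ^ t := by
              rw [ENNReal.toReal_sum (fun x _ => measure_ne_top μ _)]
              exact M_closed x0 μ hprob hchain hinit hn0 (le_of_lt hq1) t
            rw [← heq]
            exact (ENNReal.ofReal_toReal hne).symm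
    have htend : Filter.Tendsto (fun t => ENNReal.ofReal ((1 - q) ^ t))
        Filter.atTop (nhds 0) := by
      rw [← ENNReal.ofReal_zero]
      exact ENNReal.tendsto_ofReal
        (tendsto_pow_atTop_nhds_zero_of_lt_one (by linarith) (by linarith))
    exact le_antisymm (ge_of_tendsto' htend hb) zero_le
  exact measure_mono_null hsub (measure_union_null hN1 hN2)

end Main

/-- Drift over a phase of AM on OneMax (Lemma 5 of the paper). -/
theorem drift_am_phase (n : ℕ) (hn : 2 ≤ n) (p q : ℝ)
    (hp0 : 0 < p) (hp1 : p < 1) (hq0 : 0 < q) (hq1 : q < 1)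
    (i : ℕ) (hi : i ≤ n) (x0 : Point n) (hx0 : n - ones x0 = i)
    (Ω : Type) [MeasurableSpace Ω] (μ : Measure Ω) (X : ℕ → Ω → Point n × Op)
    (hprob : IsProbabilityMeasure μ) (hchain : IsMMAHH μ X (OneMax n) p q)
    (hinit : μ {ω | X 0 ω = (x0, Op.AM)} = 1) :
    ∫ ω, (((n : ℝ) - (ones (X 0 ω).1 : ℝ)) -
        ((n : ℝ) - (ones (X (switchTime X 1 ω) ω).1 : ℝ))) ∂μ
      = (2 * (i : ℝ) - (n : ℝ)) / (2 + q * ((n : ℝ) - 2)) := by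
  classical
  haveI := hprob
  have hX := hchain.1
  have hn0 : n ≠ 0 := by omega
  have honele := ones_le x0
  have hone : (ones x0 : ℝ) = (n : ℝ) - i := by
    have h := congrArg (fun m : ℕ => (m : ℝ)) hx0
    rw [Nat.cast_sub honele] at h
    linarith
  set g : Ω → ℝ := fun ω => (((n : ℝ) - (ones (X 0 ω).1 : ℝ)) -
      ((n : ℝ) - (ones (X (switchTime X 1 ω) ω).1 : ℝ))) with hgdef
  have hmeasg : Measurable g := measurable_integrand hX
  have hint : Integrable g μ := by
    refine (integrable_const (2 * (n : ℝ))).mono' hmeasg.aestronglyMeasurable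
      (ae_of_all μ fun ω => ?_)
    have b1 : (ones (X 0 ω).1 : ℝ) ≤ n := by exact_mod_cast ones_le _
    have b2 : (ones (X (switchTime X 1 ω) ω).1 : ℝ) ≤ n := by exact_mod_cast ones_le _
    have b3 : (0 : ℝ) ≤ (ones (X 0 ω).1 : ℝ) := Nat.cast_nonneg _
    have b4 : (0 : ℝ) ≤ (ones (X (switchTime X 1 ω) ω).1 : ℝ) := Nat.cast_nonneg _
    have hnn : (0 : ℝ) ≤ (n : ℝ) := Nat.cast_nonneg _
    rw [hgdef, Real.norm_eq_abs, abs_le]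
    constructor <;> simp only <;> linarith
  have hmeasB : ∀ pr : ℕ × Point n, MeasurableSet (Bev X x0 pr.1 pr.2) :=
    fun pr => measurableSet_Bev x0 hX pr.1 pr.2
  have hUc : μ (⋃ pr : ℕ × Point n, Bev X x0 pr.1 pr.2)ᶜ = 0 :=
    compl_Bev_null x0 μ hprob hchain hinit hn0 hq0 hq1
  have hrestrict : μ.restrict (⋃ pr : ℕ × Point n, Bev X x0 pr.1 pr.2) = μ := by
    rw [Measure.restrict_congr_set (MeasureTheory.ae_eq_univ.mpr hUc), Measure.restrict_univ]
  have hsum := hasSum_integral_iUnion hmeasB (Bev_pairwise_disjoint x0)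
    (hint.integrableOn (s := ⋃ pr : ℕ × Point n, Bev X x0 pr.1 pr.2))
  have hval : ∀ pr : ℕ × Point n, ∫ ω in Bev X x0 pr.1 pr.2, g ω ∂μ
      = (μ (Bev X x0 pr.1 pr.2)).toReal * ((i : ℝ) - ((n : ℝ) - (ones pr.2 : ℝ))) := by
    intro pr
    have hcongr : Set.EqOn g (fun _ => (i : ℝ) - ((n : ℝ) - (ones pr.2 : ℝ)))
        (Bev X x0 pr.1 pr.2) := by
      intro ω hω
      have hst := switchTime_eq_on_Bev x0 hω
      obtain ⟨h0, hAM, hOI, hx1⟩ := hω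
      have e0 : (X 0 ω).1 = x0 := by rw [h0]
      simp only [hgdef]
      rw [hst, e0, hx1, hone]
      ring
    rw [setIntegral_congr_fun (hmeasB pr) hcongr, setIntegral_const, smul_eq_mul, measureReal_def]
  have hsum2 : HasSum (fun pr : ℕ × Point n =>
      (μ (Bev X x0 pr.1 pr.2)).toReal * ((i : ℝ) - ((n : ℝ) - (ones pr.2 : ℝ))))
      (∫ ω in (⋃ pr : ℕ × Point n, Bev X x0 pr.1 pr.2), g ω ∂μ) := by
    simpa only [hval] using hsum
  have hfin : ∫ ω, g ω ∂μ = ∑' (t : ℕ), ∑ x : Point n,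
      (μ (Bev X x0 t x)).toReal * ((i : ℝ) - ((n : ℝ) - (ones x : ℝ))) := by
    rw [show ∫ ω, g ω ∂μ = ∫ ω in (⋃ pr : ℕ × Point n, Bev X x0 pr.1 pr.2), g ω ∂μ from by
      rw [hrestrict]]
    rw [← hsum2.tsum_eq, Summable.tsum_prod' hsum2.summable (fun t => (hasSum_fintype _).summable)]
    exact tsum_congr fun t => by rw [tsum_fintype]
  rw [hfin, tsum_congr fun t => W_closed x0 μ hprob hchain hinit hn0
    (le_of_lt hq0) (le_of_lt hq1) i hone t]
  exact tsum_geom_combo n hn q hq0 hq1 i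

end MMAHHStmt
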